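/- Let q > 0, q ≠ 1, and R_q = 2/(1-q) if 0 < q < 1, R_q = 2q/(q-1) if q > 1. Then for every complex z such that both |z| < R_q and |qz| < R_q, one has 𝓔_q(qz) · (1 + (1-q)z/2) = 𝓔_q(z) · (1 - (1-q)z/2), i.e. 𝓔_q(qz) = cay(-z/2, 1-q) · 𝓔_q(z) whenever 1 + (1-q)z/2 ≠ 0, where cay(w, a) = (1 + aw)/(1 - aw) is the Cayley transformation and 𝓔_q(z) = ∑_{n=0}^∞ z^n/{n}_q!. -/

import Mathlib

/-- The symbol `{n}_q = 2(1-q^n)/((1-q)(1+q^(n-1)))` (for `n ≥ 1`). -/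
noncomputable def qBrace (q : ℝ) (n : ℕ) : ℝ :=
  2 * (1 - q ^ n) / ((1 - q) * (1 + q ^ (n - 1)))

/-- The factorial `{n}_q! = {1}_q {2}_q ⋯ {n}_q`, with `{0}_q! = 1`. -/
noncomputable def qBraceFact (q : ℝ) (n : ℕ) : ℝ := ∏ k ∈ Finset.range n, qBrace q (k + 1)

/-- The radius `R_q = 2/(1-q)` for `0 < q < 1` and `R_q = 2q/(q-1)` for `q > 1`. -/
noncomputable def Rq (q : ℝ) : ℝ := if q < 1 then 2 / (1 - q) else 2 * q / (q - 1)

/-- The improved q-exponential function `𝓔_q(z) = ∑_{n=0}^∞ z^n/{n}_q!`. -/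
noncomputable def impExp (q : ℝ) (z : ℂ) : ℂ := ∑' n : ℕ, z ^ n / (qBraceFact q n : ℂ)

/-- The Cayley transformation `cay(w, a) = (1 + aw)/(1 - aw)`. -/
noncomputable def cay (w a : ℂ) : ℂ := (1 + a * w) / (1 - a * w)

lemma qBrace_pos {q : ℝ} (hq : 0 < q) (hq1 : q ≠ 1) (n : ℕ) : 0 < qBrace q (n + 1) := by
  have hpow : (0:ℝ) < 1 + q ^ n := by positivity
  rw [qBrace]
  simp only [Nat.add_sub_cancel]
  rcases lt_or_gt_of_ne hq1 with h | h
  · apply div_pos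
    · have : q ^ (n + 1) < 1 := pow_lt_one₀ hq.le h (Nat.succ_ne_zero n)
      linarith
    · have : (0:ℝ) < 1 - q := by linarith
      positivity
  · apply div_pos_of_neg_of_neg
    · have : 1 < q ^ (n + 1) := one_lt_pow₀ h (Nat.succ_ne_zero n)
      linarith
    · have h1 : 1 - q < 0 := by linarith
      exact mul_neg_of_neg_of_pos h1 hpow

lemma qBraceFact_pos {q : ℝ} (hq : 0 < q) (hq1 : q ≠ 1) (n : ℕ) : 0 < qBraceFact q n :=
  Finset.prod_pos fun k _ => qBrace_pos hq hq1 k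

lemma qBraceFact_succ (q : ℝ) (n : ℕ) :
    qBraceFact q (n + 1) = qBraceFact q n * qBrace q (n + 1) :=
  Finset.prod_range_succ _ _

lemma Rq_pos {q : ℝ} (hq : 0 < q) (hq1 : q ≠ 1) : 0 < Rq q := by
  rw [Rq]
  rcases lt_or_gt_of_ne hq1 with h | h
  · rw [if_pos h]
    have : (0:ℝ) < 1 - q := by linarith
    positivity
  · rw [if_neg (not_lt.2 h.le)]
    have : (0:ℝ) < q - 1 := by linarith
    positivity

lemma key_identity {q : ℝ} (hq : 0 < q) (hq1 : q ≠ 1) (n : ℕ) :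
    (1 - q ^ (n + 1)) * (2 * qBraceFact q n) =
      (1 - q) * (1 + q ^ n) * qBraceFact q (n + 1) := by
  have h1 : (1:ℝ) - q ≠ 0 := sub_ne_zero.2 (Ne.symm hq1)
  have h2 : (0:ℝ) < 1 + q ^ n := by positivity
  rw [qBraceFact_succ, qBrace]
  simp only [Nat.add_sub_cancel]
  field_simp

lemma tendsto_qBrace {q : ℝ} (hq : 0 < q) (hq1 : q ≠ 1) :
    Filter.Tendsto (fun n => qBrace q (n + 1)) Filter.atTop (nhds (Rq q)) := by
  rcases lt_or_gt_of_ne hq1 with h | h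
  · have hsub : (0:ℝ) < 1 - q := by linarith
    have hx : Filter.Tendsto (fun n : ℕ => q ^ n) Filter.atTop (nhds 0) :=
      tendsto_pow_atTop_nhds_zero_of_lt_one hq.le h
    have heq : (fun n => qBrace q (n + 1)) =
        fun n : ℕ => 2 * (1 - q ^ n * q) / ((1 - q) * (1 + q ^ n)) := by
      funext n
      rw [qBrace]
      simp only [Nat.add_sub_cancel, pow_succ]
    rw [heq]
    have hR : Rq q = 2 * (1 - 0 * q) / ((1 - q) * (1 + 0)) := by
      rw [Rq, if_pos h]; ring
    rw [hR]
    apply Filter.Tendsto.div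
    · exact ((tendsto_const_nhds.sub (hx.mul_const q)).const_mul 2)
    · exact (tendsto_const_nhds.mul (tendsto_const_nhds.add hx))
    · have : (1 - q) * (1 + 0) ≠ 0 := by positivity
      exact this
  · have hsub : (0:ℝ) < q - 1 := by linarith
    have h1 : (1:ℝ) - q ≠ 0 := by intro hh; linarith
    have hq' : q⁻¹ < 1 := inv_lt_one_of_one_lt₀ h
    have hx : Filter.Tendsto (fun n : ℕ => (q⁻¹) ^ n) Filter.atTop (nhds 0) :=
      tendsto_pow_atTop_nhds_zero_of_lt_one (by positivity) hq'
    have heq : (fun n => qBrace q (n + 1)) =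
        fun n : ℕ => 2 * ((q⁻¹) ^ n - q) / ((1 - q) * ((q⁻¹) ^ n + 1)) := by
      funext n
      rw [qBrace]
      simp only [Nat.add_sub_cancel]
      have h2 : (0:ℝ) < 1 + q ^ n := by positivity
      have h3 : (0:ℝ) < (q⁻¹) ^ n + 1 := by positivity
      have hprod : (q⁻¹) ^ n * q ^ n = 1 := by
        rw [← mul_pow, inv_mul_cancel₀ hq.ne', one_pow]
      rw [div_eq_div_iff (mul_ne_zero h1 h2.ne') (mul_ne_zero h1 h3.ne')]
      rw [pow_succ]
      linear_combination (2 * (q ^ 2 - 1)) * hprod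
    rw [heq]
    have hR : Rq q = 2 * (0 - q) / ((1 - q) * (0 + 1)) := by
      rw [Rq, if_neg (not_lt.2 h.le)]
      field_simp
      ring
    rw [hR]
    apply Filter.Tendsto.div
    · exact ((hx.sub tendsto_const_nhds).const_mul 2)
    · exact (tendsto_const_nhds.mul (hx.add tendsto_const_nhds))
    · have : (1 - q) * (0 + 1) ≠ 0 := by
        apply mul_ne_zero h1; norm_num
      exact this

lemma summable_impExp {q : ℝ} (hq : 0 < q) (hq1 : q ≠ 1) {w : ℂ} (hw : ‖w‖ < Rq q) :
    Summable (fun n : ℕ => w ^ n / (qBraceFact q n : ℂ)) := by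
  rcases eq_or_ne w 0 with rfl | hw0
  · apply summable_of_ne_finset_zero (s := {0})
    intro n hn
    simp only [Finset.mem_singleton] at hn
    rw [zero_pow hn, zero_div]
  · have hFne : ∀ n, (qBraceFact q n : ℂ) ≠ 0 := fun n => by
      exact_mod_cast (qBraceFact_pos hq hq1 n).ne'
    apply summable_of_ratio_test_tendsto_lt_one (l := ‖w‖ / Rq q)
    · exact (div_lt_one (Rq_pos hq hq1)).2 hw
    · filter_upwards with n
      exact div_ne_zero (pow_ne_zero n hw0) (hFne n)
    · have heq : (fun n : ℕ => ‖w ^ (n + 1) / (qBraceFact q (n + 1) : ℂ)‖ /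
          ‖w ^ n / (qBraceFact q n : ℂ)‖) = fun n => ‖w‖ / qBrace q (n + 1) := by
        funext n
        have hF := qBraceFact_pos hq hq1 n
        have hF1 := qBraceFact_pos hq hq1 (n + 1)
        have hB := qBrace_pos hq hq1 n
        have hw' : 0 < ‖w‖ := norm_pos_iff.2 hw0
        have h1 : ‖w‖ ≠ 0 := hw'.ne'
        have h2 : qBraceFact q n ≠ 0 := hF.ne'
        have h3 : qBrace q (n + 1) ≠ 0 := hB.ne'
        have h4 : ‖w‖ ^ n ≠ 0 := pow_ne_zero n h1
        rw [norm_div, norm_div, norm_pow, norm_pow, Complex.norm_real, Complex.norm_real,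
          Real.norm_of_nonneg hF.le, Real.norm_of_nonneg hF1.le, qBraceFact_succ, pow_succ]
        rw [div_div_div_comm, mul_div_cancel_left₀ _ h4, mul_div_cancel_left₀ _ h2]
      rw [heq]
      exact Filter.Tendsto.div tendsto_const_nhds (tendsto_qBrace hq hq1) (Rq_pos hq hq1).ne'

/-- For `|z| < R_q` and `|qz| < R_q`:
`𝓔_q(qz)(1 + (1-q)z/2) = 𝓔_q(z)(1 - (1-q)z/2)`, and whenever `1 + (1-q)z/2 ≠ 0`,
`𝓔_q(qz) = cay(-z/2, 1-q) · 𝓔_q(z)`. -/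
theorem impExp_cayley (q : ℝ) (hq : 0 < q) (hq1 : q ≠ 1) (z : ℂ)
    (hz : ‖z‖ < Rq q) (hqz : ‖(q : ℂ) * z‖ < Rq q) :
    impExp q ((q : ℂ) * z) * (1 + (1 - (q : ℂ)) * z / 2) =
      impExp q z * (1 - (1 - (q : ℂ)) * z / 2) ∧
    (1 + (1 - (q : ℂ)) * z / 2 ≠ 0 →
      impExp q ((q : ℂ) * z) = cay (-z / 2) (1 - (q : ℂ)) * impExp q z) := by
  set f : ℕ → ℂ := fun n => z ^ n / (qBraceFact q n : ℂ) with hfdef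
  set g : ℕ → ℂ := fun n => ((q : ℂ) * z) ^ n / (qBraceFact q n : ℂ) with hgdef
  have hf : Summable f := summable_impExp hq hq1 hz
  have hg : Summable g := summable_impExp hq hq1 hqz
  have hFne : ∀ n, (qBraceFact q n : ℂ) ≠ 0 := fun n => by
    exact_mod_cast (qBraceFact_pos hq hq1 n).ne'
  -- termwise identity
  have hterm : ∀ n : ℕ, g (n + 1) - f (n + 1) =
      -((1 - (q : ℂ)) * z / 2) * (g n + f n) := by
    intro n
    have hkey : ((1 : ℂ) - (q : ℂ) ^ (n + 1)) * (2 * (qBraceFact q n : ℂ)) =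
        (1 - (q : ℂ)) * (1 + (q : ℂ) ^ n) * (qBraceFact q (n + 1) : ℂ) := by
      exact_mod_cast key_identity hq hq1 n
    simp only [hfdef, hgdef]
    rw [div_sub_div_same, ← add_div, ← mul_div_assoc,
      div_eq_div_iff (hFne (n + 1)) (hFne n)]
    linear_combination (-(z ^ (n + 1)) / 2) * hkey
  have key : ∑' n, g n - ∑' n, f n =
      -((1 - (q : ℂ)) * z / 2) * (∑' n, g n + ∑' n, f n) := by
    rw [← Summable.tsum_sub hg hf, Summable.tsum_eq_zero_add (hg.sub hf)]
    have h0 : g 0 - f 0 = 0 := by simp [hfdef, hgdef, qBraceFact]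
    rw [h0, zero_add]
    calc ∑' n : ℕ, (g (n + 1) - f (n + 1))
        = ∑' n : ℕ, -((1 - (q : ℂ)) * z / 2) * (g n + f n) := tsum_congr hterm
      _ = -((1 - (q : ℂ)) * z / 2) * ∑' n : ℕ, (g n + f n) := tsum_mul_left
      _ = -((1 - (q : ℂ)) * z / 2) * (∑' n, g n + ∑' n, f n) := by
          rw [Summable.tsum_add hg hf]
  have hE : impExp q ((q : ℂ) * z) = ∑' n, g n := rfl
  have hE' : impExp q z = ∑' n, f n := rfl
  have part1 : impExp q ((q : ℂ) * z) * (1 + (1 - (q : ℂ)) * z / 2) =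
      impExp q z * (1 - (1 - (q : ℂ)) * z / 2) := by
    rw [hE, hE']
    linear_combination key
  refine ⟨part1, fun hne => ?_⟩
  rw [cay]
  have hne' : 1 - (1 - (q : ℂ)) * (-z / 2) ≠ 0 := by
    intro hh
    apply hne
    linear_combination hh
  rw [div_mul_eq_mul_div, eq_div_iff hne']
  linear_combination part1
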